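/- Let ω = ω₁ + iω₂ ∈ ℂ with ω₂ > 0 and let τ₀ ∈ (0, π/2]. Then there exists a constant C > 0 (depending only on ω and τ₀) such that for every ρ > 0, every τ ∈ [τ₀, π − τ₀], and every w₁ ∈ ℝ, setting w = w₁ + i·arctan((ω₁/ω₂)·tanh w₁), one has |exp(−ω·ρ·sinh(w − iτ))| ≤ exp(−C·ρ·cosh w₁). (The superexponential decay estimate for the Sommerfeld exponential along the contour Γ₀.) -/

import Mathlib

open Complex

theorem sommerfeld_exponential_decay_estimate
    (ω₁ ω₂ : ℝ) (hω₂ : 0 < ω₂) (τ₀ : ℝ) (hτ₀ : 0 < τ₀) (hτ₀' : τ₀ ≤ Real.pi / 2) :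
    ∃ C > (0 : ℝ), ∀ ρ : ℝ, 0 < ρ → ∀ τ : ℝ, τ₀ ≤ τ → τ ≤ Real.pi - τ₀ → ∀ w₁ : ℝ,
      ‖(Complex.exp (-((ω₁ : ℂ) + (ω₂ : ℂ) * I) * (ρ : ℂ) *
        Complex.sinh ((w₁ : ℂ) + (Real.arctan ((ω₁ / ω₂) * Real.tanh w₁) : ℂ) * I - I * (τ : ℂ))))‖
      ≤ Real.exp (-C * ρ * Real.cosh w₁) := by
  have hs0 : (0:ℝ) < Real.sqrt (ω₁^2 + ω₂^2) := Real.sqrt_pos.mpr (by positivity)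
  set s := Real.sqrt (ω₁^2 + ω₂^2) with hs
  have hsinτ₀ : 0 < Real.sin τ₀ :=
    Real.sin_pos_of_pos_of_lt_pi hτ₀ (lt_of_le_of_lt hτ₀' (by
      have := Real.pi_pos; linarith))
  refine ⟨Real.sin τ₀ * ω₂^2 / s, by positivity, ?_⟩
  intro ρ hρ τ hτ₁ hτ₂ w₁
  set θ := Real.arctan ((ω₁ / ω₂) * Real.tanh w₁) with hθ
  -- basic facts about θ
  have hcosθpos : 0 < Real.cos θ := Real.cos_arctan_pos _
  have hsinθ : Real.sin θ = (ω₁ / ω₂) * Real.tanh w₁ * Real.cos θ := by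
    have h := Real.tan_arctan ((ω₁ / ω₂) * Real.tanh w₁)
    rw [← hθ] at h
    rw [← h, Real.tan_eq_sin_div_cos, div_mul_cancel₀ _ (ne_of_gt hcosθpos)]
  have hcoshpos : 0 < Real.cosh w₁ := Real.cosh_pos w₁
  have hcosh_sq : Real.cosh w₁ ^ 2 = Real.sinh w₁ ^ 2 + 1 := Real.cosh_sq w₁
  -- bound on cos θ
  have hcosθ : ω₂ / s ≤ Real.cos θ := by
    rw [hθ, Real.cos_arctan]
    have htanh : (Real.tanh w₁)^2 ≤ 1 := by
      rw [Real.tanh_eq_sinh_div_cosh, div_pow, div_le_one (by positivity)]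
      nlinarith
    have h1 : 1 + ((ω₁ / ω₂) * Real.tanh w₁) ^ 2 ≤ (ω₁^2 + ω₂^2) / ω₂^2 := by
      have : ((ω₁ / ω₂) * Real.tanh w₁) ^ 2 ≤ (ω₁/ω₂)^2 := by
        rw [mul_pow]
        nlinarith [sq_nonneg (ω₁/ω₂)]
      have h2 : (ω₁/ω₂)^2 = ω₁^2/ω₂^2 := by ring
      rw [h2] at this
      have : 1 + ((ω₁ / ω₂) * Real.tanh w₁) ^ 2 ≤ 1 + ω₁^2/ω₂^2 := by linarith
      calc 1 + ((ω₁ / ω₂) * Real.tanh w₁) ^ 2 ≤ 1 + ω₁^2/ω₂^2 := this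
        _ = (ω₁^2 + ω₂^2) / ω₂^2 := by field_simp; ring
    have hsq : Real.sqrt (1 + ((ω₁ / ω₂) * Real.tanh w₁) ^ 2) ≤ s / ω₂ := by
      have : Real.sqrt (1 + ((ω₁ / ω₂) * Real.tanh w₁) ^ 2)
          ≤ Real.sqrt ((ω₁^2 + ω₂^2) / ω₂^2) := Real.sqrt_le_sqrt h1
      rwa [Real.sqrt_div (by positivity), Real.sqrt_sq hω₂.le] at this
    have hsqpos : 0 < Real.sqrt (1 + ((ω₁ / ω₂) * Real.tanh w₁) ^ 2) :=
      Real.sqrt_pos.mpr (by positivity)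
    rw [div_le_div_iff₀ hs0 hsqpos]
    calc ω₂ * Real.sqrt (1 + ((ω₁ / ω₂) * Real.tanh w₁) ^ 2) ≤ ω₂ * (s / ω₂) := by
          exact mul_le_mul_of_nonneg_left hsq hω₂.le
      _ = 1 * s := by field_simp
  -- bound on sin τ
  have hsinτ : Real.sin τ₀ ≤ Real.sin τ := by
    rcases le_total τ (Real.pi / 2) with h | h
    · exact Real.sin_le_sin_of_le_of_le_pi_div_two (by linarith) h hτ₁
    · rw [← Real.sin_pi_sub τ]
      exact Real.sin_le_sin_of_le_of_le_pi_div_two (by linarith) (by linarith) (by linarith)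
  have hsinτpos : 0 < Real.sin τ := lt_of_lt_of_le hsinτ₀ hsinτ
  -- rewrite the complex exponential
  have harg : ((w₁ : ℂ) + (θ : ℂ) * I - I * (τ : ℂ)) = (w₁ : ℂ) + ((θ - τ : ℝ) : ℂ) * I := by
    push_cast; ring
  rw [Complex.norm_exp]
  apply Real.exp_le_exp.mpr
  have hsinh : Complex.sinh ((w₁ : ℂ) + (θ : ℂ) * I - I * (τ : ℂ))
      = (Real.sinh w₁ * Real.cos (θ - τ) : ℝ) + (Real.cosh w₁ * Real.sin (θ - τ) : ℝ) * I := by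
    rw [harg, Complex.sinh_add, Complex.sinh_mul_I, Complex.cosh_mul_I]
    push_cast [Complex.ofReal_sinh, Complex.ofReal_cosh, Complex.ofReal_cos, Complex.ofReal_sin]
    ring
  have hre : (-((ω₁ : ℂ) + (ω₂ : ℂ) * I) * (ρ : ℂ) *
      Complex.sinh ((w₁ : ℂ) + (θ : ℂ) * I - I * (τ : ℂ))).re
      = -ρ * (ω₁ * (Real.sinh w₁ * Real.cos (θ - τ)) - ω₂ * (Real.cosh w₁ * Real.sin (θ - τ))) := by
    rw [hsinh]
    simp only [Complex.add_re, Complex.add_im, Complex.mul_re, Complex.mul_im,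
      Complex.neg_re, Complex.neg_im, Complex.I_re, Complex.I_im,
      Complex.ofReal_re, Complex.ofReal_im]
    ring
  rw [hre]
  -- key real inequality
  have hident : ω₁ * (Real.sinh w₁ * Real.cos (θ - τ)) - ω₂ * (Real.cosh w₁ * Real.sin (θ - τ))
      = Real.sin τ * Real.cos θ *
        (ω₁^2 * Real.sinh w₁ ^ 2 / (ω₂ * Real.cosh w₁) + ω₂ * Real.cosh w₁) := by
    rw [Real.cos_sub, Real.sin_sub, hsinθ, Real.tanh_eq_sinh_div_cosh]
    field_simp
    ring
  have hbr : ω₂ * Real.cosh w₁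
      ≤ ω₁^2 * Real.sinh w₁ ^ 2 / (ω₂ * Real.cosh w₁) + ω₂ * Real.cosh w₁ :=
    le_add_of_nonneg_left (by positivity)
  have h1 : Real.sin τ₀ * (ω₂ / s) ≤ Real.sin τ * Real.cos θ :=
    mul_le_mul hsinτ hcosθ (by positivity) hsinτpos.le
  have h2 : (Real.sin τ₀ * (ω₂ / s)) * (ω₂ * Real.cosh w₁)
      ≤ (Real.sin τ * Real.cos θ) *
        (ω₁^2 * Real.sinh w₁ ^ 2 / (ω₂ * Real.cosh w₁) + ω₂ * Real.cosh w₁) :=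
    mul_le_mul h1 hbr (by positivity) (by positivity)
  have hkey : Real.sin τ₀ * ω₂^2 / s * Real.cosh w₁
      ≤ ω₁ * (Real.sinh w₁ * Real.cos (θ - τ)) - ω₂ * (Real.cosh w₁ * Real.sin (θ - τ)) := by
    rw [hident]
    calc Real.sin τ₀ * ω₂^2 / s * Real.cosh w₁
        = (Real.sin τ₀ * (ω₂ / s)) * (ω₂ * Real.cosh w₁) := by ring
      _ ≤ _ := h2
  nlinarith [mul_le_mul_of_nonneg_left hkey hρ.le]
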